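/- Assume Cramer's conjecture in the weak form: there exists a constant C > 0 such that p - p' ≤ C·(ln p')² for all pairs of consecutive primes p' < p. Then for every real ε with 0 < ε ≤ 1 there exists a constant N such that for every integer n > N there is a prime p with (n-1)^(1+ε) < p < n^(1+ε), where the powers are real powers. -/

import Mathlib

open Filter Real

lemma exists_consec (k : ℕ) (hk : 2 ≤ k) :
    ∃ p' p : ℕ, p'.Prime ∧ p.Prime ∧ p' ≤ k ∧ k < p ∧ p' < p ∧
      ∀ r : ℕ, r.Prime → ¬(p' < r ∧ r < p) := by
  classical
  set S := (Finset.range (k+1)).filter Nat.Prime with hS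
  have hne : S.Nonempty := ⟨2, by simp [hS, Nat.lt_succ_iff, hk, Nat.prime_two]⟩
  set p' := S.max' hne with hp'def
  have hp'S : p' ∈ S := S.max'_mem hne
  have hp' : p'.Prime := (Finset.mem_filter.mp hp'S).2
  have hp'le : p' ≤ k := by
    have := Finset.mem_range.mp (Finset.mem_filter.mp hp'S).1
    omega
  obtain ⟨q, hkq, hq⟩ := Nat.exists_infinite_primes (k+1)
  have hex : ∃ m, m.Prime ∧ k < m := ⟨q, hq, by omega⟩
  set p := Nat.find hex with hpdef
  obtain ⟨hpp, hkp⟩ := Nat.find_spec hex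
  refine ⟨p', p, hp', hpp, hp'le, hkp, by omega, ?_⟩
  rintro r hr ⟨h1, h2⟩
  by_cases hrk : r ≤ k
  · have : r ∈ S := Finset.mem_filter.mpr ⟨Finset.mem_range.mpr (by omega), hr⟩
    exact absurd (S.le_max' r this) (by omega)
  · exact absurd (Nat.find_min' hex ⟨hr, by omega⟩) (by omega)

theorem diophantine_of_cramer
    (hCramer : ∃ C : ℝ, 0 < C ∧ ∀ p' p : ℕ, p'.Prime → p.Prime → p' < p →
      (∀ r : ℕ, r.Prime → ¬(p' < r ∧ r < p)) →
      (p : ℝ) - (p' : ℝ) ≤ C * (Real.log p') ^ 2) :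
    ∀ ε : ℝ, 0 < ε → ε ≤ 1 → ∃ N : ℕ, ∀ n : ℕ, N < n →
      ∃ p : ℕ, p.Prime ∧ ((n : ℝ) - 1) ^ (1 + ε) < (p : ℝ) ∧
        (p : ℝ) < (n : ℝ) ^ (1 + ε) := by
  obtain ⟨C, hC, hCr⟩ := hCramer
  intro ε hε hε1
  have h1ε : (0:ℝ) < 1 + ε := by linarith
  -- asymptotics: C * (1+ε)^2 * (log m)^2 < (1+ε) * m^ε eventually
  have hlo := isLittleO_log_rpow_rpow_atTop (2:ℝ) hε
  have hδ : (0:ℝ) < 1 / (2 * C * (1+ε)) := by positivity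
  have hev : ∀ᶠ m : ℝ in atTop,
      C * (1+ε)^2 * (Real.log m)^2 < (1+ε) * m ^ ε := by
    filter_upwards [hlo.bound hδ, eventually_ge_atTop (1:ℝ)] with m hm hm1
    have hm0 : (0:ℝ) < m := by linarith
    have hlog0 : 0 ≤ Real.log m := Real.log_nonneg hm1
    have hrp : (0:ℝ) < m ^ ε := Real.rpow_pos_of_pos hm0 ε
    have heq : Real.log m ^ (2:ℝ) = (Real.log m)^2 := by
      rw [show (2:ℝ) = ((2:ℕ):ℝ) by norm_num, Real.rpow_natCast]
    rw [Real.norm_eq_abs, Real.norm_eq_abs, heq, abs_of_nonneg (by positivity),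
      abs_of_nonneg hrp.le] at hm
    have h3 : (Real.log m)^2 ≤ 1 / (2 * C * (1+ε)) * m ^ ε := hm
    have hC1 : 0 < C * (1+ε) := by positivity
    have := mul_le_mul_of_nonneg_left h3 (le_of_lt (by positivity : (0:ℝ) < C * (1+ε)^2))
    calc C * (1+ε)^2 * (Real.log m)^2
        ≤ C * (1+ε)^2 * (1 / (2 * C * (1+ε)) * m ^ ε) := this
      _ = (1+ε) / 2 * m ^ ε := by field_simp
      _ < (1+ε) * m ^ ε := by nlinarith
  obtain ⟨M, hM⟩ := eventually_atTop.mp hev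
  set N : ℕ := max (⌈M⌉₊ + 1) 2 with hN
  refine ⟨N, fun n hn => ?_⟩
  have hn3 : 3 ≤ n := by
    have : 2 ≤ N := le_max_right _ _
    omega
  set m : ℝ := (n:ℝ) - 1 with hm
  have hm2 : (2:ℝ) ≤ m := by
    have : (3:ℝ) ≤ (n:ℝ) := by exact_mod_cast hn3
    simp [hm]; linarith
  have hm0 : (0:ℝ) < m := by linarith
  have hmM : M ≤ m := by
    have h1 : ⌈M⌉₊ + 1 ≤ N := le_max_left _ _
    have h2 : ⌈M⌉₊ + 1 < n := by omega
    have : M ≤ (⌈M⌉₊ : ℝ) := Nat.le_ceil M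
    have : ((⌈M⌉₊ : ℝ) + 1) ≤ (n:ℝ) := by exact_mod_cast h2.le
    simp only [hm]; linarith [Nat.le_ceil M]
  set x : ℝ := m ^ (1+ε) with hx
  have hxm : m ≤ x := by
    have := Real.rpow_le_rpow_of_exponent_le (by linarith : (1:ℝ) ≤ m)
      (by linarith : (1:ℝ) ≤ 1 + ε)
    simpa [hx, Real.rpow_one] using this
  have hx2 : (2:ℝ) ≤ x := le_trans hm2 hxm
  have hx0 : (0:ℝ) < x := by linarith
  set k : ℕ := ⌊x⌋₊ with hk
  have hk2 : 2 ≤ k := Nat.le_floor (by exact_mod_cast hx2)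
  obtain ⟨p', p, hp', hpp, hp'k, hkp, hp'p, hcons⟩ := exists_consec k hk2
  have hp'x : (p' : ℝ) ≤ x := le_trans (by exact_mod_cast hp'k) (Nat.floor_le hx0.le)
  have hxp : x < (p : ℝ) := by
    have := Nat.lt_floor_add_one x
    have hkp' : (k:ℝ) + 1 ≤ (p:ℝ) := by exact_mod_cast hkp
    linarith
  -- Cramer bound
  have hcr : (p:ℝ) - (p':ℝ) ≤ C * (Real.log p')^2 := hCr p' p hp' hpp hp'p hcons
  have hp'2 : (2:ℝ) ≤ (p':ℝ) := by exact_mod_cast hp'.two_le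
  have hlogp' : Real.log p' ≤ Real.log x := Real.log_le_log (by linarith) hp'x
  have hlogp'0 : 0 ≤ Real.log p' := Real.log_nonneg (by linarith)
  have hlogx : Real.log x = (1+ε) * Real.log m := Real.log_rpow hm0 _
  have hsq : (Real.log p')^2 ≤ (1+ε)^2 * (Real.log m)^2 := by
    have := pow_le_pow_left₀ hlogp'0 hlogp' 2
    rw [hlogx, mul_pow] at this
    exact this
  have hbound : (p:ℝ) ≤ x + C * (1+ε)^2 * (Real.log m)^2 := by
    have : C * (Real.log p')^2 ≤ C * ((1+ε)^2 * (Real.log m)^2) :=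
      mul_le_mul_of_nonneg_left hsq hC.le
    nlinarith [hp'x]
  -- Bernoulli lower bound on n^(1+ε)
  have hnx : x + (1+ε) * m ^ ε ≤ (n:ℝ) ^ (1+ε) := by
    have hmn : (n:ℝ) = m * (1 + 1/m) := by field_simp [hm]; linarith
    have hber : 1 + (1+ε) * (1/m) ≤ (1 + 1/m) ^ (1+ε) :=
      one_add_mul_self_le_rpow_one_add (by nlinarith [one_div_pos.mpr hm0])
        (by linarith : (1:ℝ) ≤ 1+ε)
    have hmul : (n:ℝ) ^ (1+ε) = m ^ (1+ε) * (1 + 1/m) ^ (1+ε) := by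
      rw [hmn, Real.mul_rpow hm0.le (by positivity)]
    have hmε : m ^ (1+ε) = m * m ^ ε := by
      rw [Real.rpow_add hm0, Real.rpow_one]
    have hmpos : (0:ℝ) < m ^ (1+ε) := Real.rpow_pos_of_pos hm0 _
    calc x + (1+ε) * m ^ ε = m ^ (1+ε) * (1 + (1+ε) * (1/m)) := by
          rw [hmε]; field_simp [hx, hmε]; rw [hx, hmε]; ring
      _ ≤ m ^ (1+ε) * (1 + 1/m) ^ (1+ε) :=
          mul_le_mul_of_nonneg_left hber hmpos.le
      _ = (n:ℝ) ^ (1+ε) := hmul.symm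
  have hasym := hM m hmM
  refine ⟨p, hpp, ?_, ?_⟩
  · exact hxp
  · linarith
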